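/- Let k ≥ 1, let a_1, …, a_k be pairwise relatively prime positive integers, and let t ≥ 1 be an integer. Then every representation (x_1, …, x_k) of (k+t-1)·Π − Σ in terms of (A_1, …, A_k) satisfies x_j ≡ −1 (mod a_j) for every j; more precisely, there exist nonnegative integers n_1, …, n_k with n_1 + ⋯ + n_k = t − 1 such that x_j = (n_j + 1)·a_j − 1 for every j. -/

import Mathlib

/-- The number of representations of an integer `x` as a nonnegative integral
linear combination `∑ i, m i * A i` of `A 0, …, A (k-1)`.
(Negative integers have zero representations.) -/
noncomputable def numRep {k : ℕ} (A : Fin k → ℕ) (x : ℤ) : ℕ :=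
  {m : Fin k → ℕ | (∑ i, (m i : ℤ) * (A i : ℤ)) = x}.ncard

/-- Every representation `x` of `(k+t-1)·Π − Σ` in terms of `(A₁, …, A_k)`
satisfies `x j ≡ -1 (mod a j)` for all `j`; more precisely `x j = (n j + 1)·a j − 1`
for some nonnegative `n` summing to `t − 1`. -/
theorem stmt4 (k t : ℕ) (hk : 1 ≤ k) (ht : 1 ≤ t)
    (a : Fin k → ℕ) (ha : ∀ i, 0 < a i)
    (hcop : ∀ i j, i ≠ j → Nat.Coprime (a i) (a j)) :
    ∀ x : Fin k → ℕ,
      (∑ i, (x i : ℤ) * (((∏ j, a j) / a i : ℕ) : ℤ))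
          = ((k : ℤ) + (t : ℤ) - 1) * ((∏ j, a j : ℕ) : ℤ)
            - ((∑ i, (∏ j, a j) / a i : ℕ) : ℤ) →
      (∀ j, (x j : ℤ) ≡ -1 [ZMOD (a j : ℤ)]) ∧
      ∃ n : Fin k → ℕ, (∑ j, n j) = t - 1 ∧ ∀ j, x j = (n j + 1) * a j - 1 := by
  intro x hx
  set P : ℕ := ∏ j, a j with hP
  have hPpos : 0 < P := Finset.prod_pos fun i _ => ha i
  have hdvd : ∀ i, a i ∣ P := fun i => Finset.dvd_prod_of_mem a (Finset.mem_univ i)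
  have hAeq : ∀ i, P / a i = ∏ j ∈ Finset.univ.erase i, a j := by
    intro i
    rw [hP, ← Finset.prod_erase_mul _ _ (Finset.mem_univ i), Nat.mul_div_cancel _ (ha i)]
  have hcopA : ∀ j, Nat.Coprime (a j) (P / a j) := by
    intro j
    rw [hAeq j]
    exact Nat.Coprime.prod_right fun i hi => hcop j i (Finset.ne_of_mem_erase hi).symm
  have hdvdA : ∀ i j, i ≠ j → a j ∣ P / a i := by
    intro i j h
    rw [hAeq i]
    exact Finset.dvd_prod_of_mem a (Finset.mem_erase.mpr ⟨h.symm, Finset.mem_univ j⟩)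
  have hsum : ∑ i, ((x i : ℤ) + 1) * ((P / a i : ℕ) : ℤ)
      = ((k : ℤ) + t - 1) * (P : ℤ) := by
    rw [Nat.cast_sum] at hx
    simp only [add_mul, one_mul, Finset.sum_add_distrib]
    rw [hx]; ring
  have key : ∀ j, a j ∣ x j + 1 := by
    intro j
    have h1 : (a j : ℤ) ∣ ∑ i ∈ Finset.univ.erase j, ((x i : ℤ) + 1) * ((P / a i : ℕ) : ℤ) :=
      Finset.dvd_sum fun i hi =>
        Dvd.dvd.mul_left (Int.natCast_dvd_natCast.mpr
          (hdvdA i j (Finset.ne_of_mem_erase hi))) _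
    have h2 : ((x j : ℤ) + 1) * ((P / a j : ℕ) : ℤ)
        = ((k : ℤ) + t - 1) * (P : ℤ)
          - ∑ i ∈ Finset.univ.erase j, ((x i : ℤ) + 1) * ((P / a i : ℕ) : ℤ) := by
      rw [← hsum, ← Finset.add_sum_erase _ _ (Finset.mem_univ j)]; ring
    have h3 : (a j : ℤ) ∣ ((x j : ℤ) + 1) * ((P / a j : ℕ) : ℤ) := by
      rw [h2]
      exact dvd_sub (Dvd.dvd.mul_left (Int.natCast_dvd_natCast.mpr (hdvd j)) _) h1
    have h4 : a j ∣ (x j + 1) * (P / a j) := by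
      rw [← Int.natCast_dvd_natCast]
      push_cast
      exact h3
    exact (Nat.Coprime.dvd_of_dvd_mul_right (hcopA j)) h4
  set m : Fin k → ℕ := fun j => (x j + 1) / a j with hmdef
  have hm : ∀ j, x j + 1 = m j * a j := fun j => (Nat.div_mul_cancel (key j)).symm
  have hmpos : ∀ j, 1 ≤ m j := by
    intro j
    rcases Nat.eq_zero_or_pos (m j) with h | h
    · have := hm j; rw [h] at this; simp at this
    · exact h
  have hmsum : ∑ j, m j = k + t - 1 := by
    have h5 : (∑ j, (m j : ℤ)) * (P : ℤ) = ((k : ℤ) + t - 1) * (P : ℤ) := by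
      rw [Finset.sum_mul, ← hsum]
      refine Finset.sum_congr rfl fun j _ => ?_
      have : ((x j : ℤ) + 1) = (m j : ℤ) * (a j : ℤ) := by exact_mod_cast congrArg (Nat.cast (R := ℤ)) (hm j)
      rw [this, mul_assoc]
      congr 1
      rw [← Nat.cast_mul, Nat.mul_div_cancel' (hdvd j)]
    have h6 : (∑ j, (m j : ℤ)) = (k : ℤ) + t - 1 :=
      mul_right_cancel₀ (by exact_mod_cast hPpos.ne') h5
    have h7 : ((∑ j, m j : ℕ) : ℤ) = (k : ℤ) + t - 1 := by push_cast; exact h6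
    omega
  refine ⟨fun j => ?_, fun j => m j - 1, ?_, fun j => ?_⟩
  · have : (a j : ℤ) ∣ (-1 : ℤ) - (x j : ℤ) := by
      have : (a j : ℤ) ∣ ((x j : ℤ) + 1) := by exact_mod_cast Int.natCast_dvd_natCast.mpr (key j)
      have := dvd_neg.mpr this
      rwa [show (-1 : ℤ) - (x j : ℤ) = -((x j : ℤ) + 1) by ring]
    exact Int.modEq_iff_dvd.mpr this
  · show (∑ j, (m j - 1)) = t - 1
    have : ∑ j, (m j - 1) + ∑ j : Fin k, 1 = ∑ j, m j := by
      rw [← Finset.sum_add_distrib]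
      exact Finset.sum_congr rfl fun j _ => by have := hmpos j; omega
    simp only [Finset.sum_const, Finset.card_univ, Fintype.card_fin, smul_eq_mul, mul_one] at this
    omega
  · show x j = (m j - 1 + 1) * a j - 1
    have h8 : x j + 1 = (m j - 1 + 1) * a j := by
      rw [hm j]; congr 1; have := hmpos j; omega
    omega
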